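/- Let α ∈ ℂ and let y : ℂ → ℂ be holomorphic. Define, for ζ ∈ ℂ∖{0} and t ∈ ℂ, A(ζ,t) = −4iζ²·σ₃ + 4y(t)ζ·σ₁ − 2y′(t)·σ₂ − i(2y(t)²+t)·σ₃ − (α/ζ)·σ₁ and U(ζ,t) = −iζ·σ₃ + y(t)·σ₁, where σ₁ = [[0,1],[1,0]], σ₂ = [[0,−i],[i,0]], σ₃ = [[1,0],[0,−1]]. Then the zero-curvature equation ∂A/∂t − ∂U/∂ζ + A·U − U·A = 0 holds for all ζ ∈ ℂ∖{0} and t ∈ ℂ if and only if y″(t) = 2y(t)³ + t·y(t) + α for all t ∈ ℂ. -/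

import Mathlib

open Matrix Complex

noncomputable section

def σ₁ : Matrix (Fin 2) (Fin 2) ℂ := !![0, 1; 1, 0]
def σ₂ : Matrix (Fin 2) (Fin 2) ℂ := !![0, -Complex.I; Complex.I, 0]
def σ₃ : Matrix (Fin 2) (Fin 2) ℂ := !![1, 0; 0, -1]

/-- The `ζ`-coefficient matrix of the Flaschka–Newell pair `FN` with parameter `α`. -/
def A₇ (α : ℂ) (y : ℂ → ℂ) (ζ t : ℂ) : Matrix (Fin 2) (Fin 2) ℂ :=
  (-4*Complex.I*ζ^2) • σ₃ + (4*(y t)*ζ) • σ₁ + (-2*deriv y t) • σ₂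
    + (-(Complex.I*(2*(y t)^2 + t))) • σ₃ + (-(α/ζ)) • σ₁

/-- The `t`-coefficient matrix of the Flaschka–Newell pair `FN`. -/
def U₇ (y : ℂ → ℂ) (ζ t : ℂ) : Matrix (Fin 2) (Fin 2) ℂ :=
  (-Complex.I*ζ) • σ₃ + (y t) • σ₁

/-- The zero-curvature equation for the Flaschka–Newell pair holds for all `ζ ≠ 0`
and all `t` iff `y` solves the second Painlevé equation with parameter `α`. -/
theorem stmt_7 (α : ℂ) (y : ℂ → ℂ) (hy : Differentiable ℂ y) :
    (∀ ζ : ℂ, ζ ≠ 0 → ∀ t : ℂ,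
      (Matrix.of fun i j => deriv (fun s => A₇ α y ζ s i j) t)
        - (Matrix.of fun i j => deriv (fun w => U₇ y w t i j) ζ)
        + A₇ α y ζ t * U₇ y ζ t - U₇ y ζ t * A₇ α y ζ t = 0)
    ↔ (∀ t : ℂ, deriv (deriv y) t = 2*(y t)^3 + t*(y t) + α) := by
  set I := Complex.I
  have hy' : ∀ s, HasDerivAt y (deriv y s) s := fun s => (hy s).hasDerivAt
  have hdy : Differentiable ℂ (deriv y) := fun z =>
    (((analyticOnNhd_univ_iff_differentiable.2 hy).deriv) z (Set.mem_univ z)).differentiableAt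
  have hy'' : ∀ s, HasDerivAt (deriv y) (deriv (deriv y) s) s := fun s => (hdy s).hasDerivAt
  -- entry formulas
  have a00 : ∀ ζ s : ℂ, A₇ α y ζ s 0 0 = -4*I*ζ^2 - I*(2*(y s)^2 + s) := by
    intro ζ s; simp [A₇, σ₁, σ₂, σ₃]; try ring
  have a01 : ∀ ζ s : ℂ, A₇ α y ζ s 0 1 = 4*(y s)*ζ + 2*I*(deriv y s) - α/ζ := by
    intro ζ s; simp [A₇, σ₁, σ₂, σ₃]; try ring
  have a10 : ∀ ζ s : ℂ, A₇ α y ζ s 1 0 = 4*(y s)*ζ - 2*I*(deriv y s) - α/ζ := by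
    intro ζ s; simp [A₇, σ₁, σ₂, σ₃]; try ring
  have a11 : ∀ ζ s : ℂ, A₇ α y ζ s 1 1 = 4*I*ζ^2 + I*(2*(y s)^2 + s) := by
    intro ζ s; simp [A₇, σ₁, σ₂, σ₃]; try ring
  have u00 : ∀ w s : ℂ, U₇ y w s 0 0 = -I*w := by
    intro w s; simp [U₇, σ₁, σ₃, I]
  have u01 : ∀ w s : ℂ, U₇ y w s 0 1 = y s := by
    intro w s; simp [U₇, σ₁, σ₃]
  have u10 : ∀ w s : ℂ, U₇ y w s 1 0 = y s := by
    intro w s; simp [U₇, σ₁, σ₃]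
  have u11 : ∀ w s : ℂ, U₇ y w s 1 1 = I*w := by
    intro w s; simp [U₇, σ₁, σ₃, I]
  -- derivative of A entries in t
  have d00 : ∀ ζ t : ℂ, deriv (fun s => A₇ α y ζ s 0 0) t = -(I*(4*(y t)*(deriv y t) + 1)) := by
    intro ζ t
    simp only [a00]
    have h1 : HasDerivAt (fun s : ℂ => 2*(y s)^2 + s)
        (2*((2:ℕ)*(y t)^(2-1)*deriv y t) + 1) t :=
      (((hy' t).pow 2).const_mul 2).add (hasDerivAt_id t)
    have h3 := (hasDerivAt_const t (-4*I*ζ^2)).sub (h1.const_mul I)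
    have h4 : HasDerivAt (fun s : ℂ => -4*I*ζ^2 - I*(2*(y s)^2 + s))
        (-(I*(4*(y t)*(deriv y t) + 1))) t := by
      refine h3.congr_deriv ?_; push_cast; ring
    exact h4.deriv
  have d01 : ∀ ζ t : ℂ, deriv (fun s => A₇ α y ζ s 0 1) t
      = 4*(deriv y t)*ζ + 2*I*(deriv (deriv y) t) := by
    intro ζ t
    simp only [a01]
    have h1 : HasDerivAt (fun s : ℂ => 4*(y s)*ζ + 2*I*(deriv y s) - α/ζ)
        (4*(deriv y t)*ζ + 2*I*(deriv (deriv y) t)) t := by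
      have := ((((hy' t).const_mul 4).mul_const ζ).add ((hy'' t).const_mul (2*I))).sub_const (α/ζ)
      exact this
    exact h1.deriv
  have d10 : ∀ ζ t : ℂ, deriv (fun s => A₇ α y ζ s 1 0) t
      = 4*(deriv y t)*ζ - 2*I*(deriv (deriv y) t) := by
    intro ζ t
    simp only [a10]
    have h1 : HasDerivAt (fun s : ℂ => 4*(y s)*ζ - 2*I*(deriv y s) - α/ζ)
        (4*(deriv y t)*ζ - 2*I*(deriv (deriv y) t)) t := by
      have := ((((hy' t).const_mul 4).mul_const ζ).sub ((hy'' t).const_mul (2*I))).sub_const (α/ζ)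
      exact this
    exact h1.deriv
  have d11 : ∀ ζ t : ℂ, deriv (fun s => A₇ α y ζ s 1 1) t = I*(4*(y t)*(deriv y t) + 1) := by
    intro ζ t
    simp only [a11]
    have h1 : HasDerivAt (fun s : ℂ => 2*(y s)^2 + s)
        (2*((2:ℕ)*(y t)^(2-1)*deriv y t) + 1) t :=
      (((hy' t).pow 2).const_mul 2).add (hasDerivAt_id t)
    have h3 := (hasDerivAt_const t (4*I*ζ^2)).add (h1.const_mul I)
    have h4 : HasDerivAt (fun s : ℂ => 4*I*ζ^2 + I*(2*(y s)^2 + s))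
        (I*(4*(y t)*(deriv y t) + 1)) t := by
      refine h3.congr_deriv ?_; push_cast; ring
    exact h4.deriv
  -- derivative of U entries in ζ
  have e00 : ∀ ζ t : ℂ, deriv (fun w => U₇ y w t 0 0) ζ = -I := by
    intro ζ t; simp only [u00]
    simpa using ((hasDerivAt_id ζ).const_mul (-I)).deriv
  have e01 : ∀ ζ t : ℂ, deriv (fun w => U₇ y w t 0 1) ζ = 0 := by
    intro ζ t; simp only [u01, deriv_const]
  have e10 : ∀ ζ t : ℂ, deriv (fun w => U₇ y w t 1 0) ζ = 0 := by
    intro ζ t; simp only [u10, deriv_const]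
  have e11 : ∀ ζ t : ℂ, deriv (fun w => U₇ y w t 1 1) ζ = I := by
    intro ζ t; simp only [u11]
    simpa using ((hasDerivAt_id ζ).const_mul I).deriv
  have key : ∀ ζ : ℂ, ζ ≠ 0 → ∀ t : ℂ,
      (Matrix.of fun i j => deriv (fun s => A₇ α y ζ s i j) t)
        - (Matrix.of fun i j => deriv (fun w => U₇ y w t i j) ζ)
        + A₇ α y ζ t * U₇ y ζ t - U₇ y ζ t * A₇ α y ζ t
      = (2*(2*(y t)^3 + t*(y t) + α) - 2*deriv (deriv y) t) • σ₂ := by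
    intro ζ hζ t
    ext i j
    fin_cases i <;> fin_cases j <;>
      simp only [Fin.zero_eta, Fin.mk_one, Fin.isValue, Matrix.sub_apply, Matrix.add_apply,
        Matrix.of_apply, Matrix.mul_apply, Fin.sum_univ_two, Matrix.smul_apply, smul_eq_mul]
    · rw [d00, e00, a01, a10, u01, u10]
      simp only [σ₂, Matrix.cons_val', Matrix.cons_val_zero, Matrix.cons_val_one,
        Matrix.head_cons, Matrix.empty_val', Matrix.cons_val_fin_one, Matrix.of_apply]
      field_simp
      ring
    · rw [d01, e01, a00, a01, a11, u01, u11, u00]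
      simp only [σ₂, Matrix.cons_val', Matrix.cons_val_zero, Matrix.cons_val_one,
        Matrix.head_cons, Matrix.empty_val', Matrix.cons_val_fin_one, Matrix.of_apply]
      field_simp
      linear_combination (4*deriv y t*ζ) * Complex.I_sq
    · rw [d10, e10, a10, a11, a00, u00, u11, u10]
      simp only [σ₂, Matrix.cons_val', Matrix.cons_val_zero, Matrix.cons_val_one,
        Matrix.head_cons, Matrix.empty_val', Matrix.cons_val_fin_one, Matrix.of_apply]
      field_simp
      linear_combination (4*deriv y t*ζ) * Complex.I_sq
    · rw [d11, e11, a10, a01, u01, u10]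
      simp only [σ₂, Matrix.cons_val', Matrix.cons_val_zero, Matrix.cons_val_one,
        Matrix.head_cons, Matrix.empty_val', Matrix.cons_val_fin_one, Matrix.of_apply]
      field_simp
      ring
  constructor
  · intro h t
    have h1 := h 1 one_ne_zero t
    rw [key 1 one_ne_zero t] at h1
    have h2 := congrArg (fun M : Matrix (Fin 2) (Fin 2) ℂ => M 0 1) h1
    simp only [Matrix.smul_apply, σ₂, Matrix.cons_val', Matrix.cons_val_zero,
      Matrix.cons_val_one, Matrix.head_cons, smul_eq_mul, Matrix.zero_apply,
      Matrix.empty_val', Matrix.cons_val_fin_one, Matrix.of_apply] at h2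
    have h3 : (2*(2*(y t)^3 + t*(y t) + α) - 2*deriv (deriv y) t) = 0 := by
      rcases mul_eq_zero.1 h2 with h | h
      · exact h
      · exact absurd (neg_eq_zero.1 h) Complex.I_ne_zero
    linear_combination -h3/2
  · intro h ζ hζ t
    rw [key ζ hζ t, h t, sub_self, zero_smul]
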